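/- Let m ∈ ℕ, T₀ ∈ ℝ, and let N : [T₀,∞) → (m × m real matrices) be continuous with every entry of N(t) strictly positive for every t ≥ T₀. Let P : [T₀,∞) → (m × m real matrices) be differentiable with P'(t) = N(t)·P(t) for all t ≥ T₀ and P(T₀) = 1. Then every entry of P(t) is strictly positive for every t > T₀. -/

import Mathlib

open Filter Topology

set_option maxHeartbeats 1000000 in
/-- Strict positivity of the fundamental matrix (used in Corollary 2 ('mon2') of
the paper): if `N(t)` is entrywise strictly positive for `t ≥ T₀` and `P' = N·P`,
`P(T₀) = 1`, then `P(t)` is entrywise strictly positive for every `t > T₀`. -/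
theorem stmt_14 (m : ℕ) (T₀ : ℝ)
    (N : ℝ → Matrix (Fin m) (Fin m) ℝ)
    (hNc : ∀ i j, ContinuousOn (fun t => N t i j) (Set.Ici T₀))
    (hN0 : ∀ t ≥ T₀, ∀ i j, 0 < N t i j)
    (P : ℝ → Matrix (Fin m) (Fin m) ℝ)
    (hP : ∀ t ≥ T₀, ∀ i j,
      HasDerivWithinAt (fun s => P s i j) ((N t * P t) i j) (Set.Ici T₀) t)
    (hP0 : P T₀ = 1) :
    ∀ t > T₀, ∀ i j, 0 < P t i j := by
  have hPc : ∀ i j, ContinuousOn (fun s => P s i j) (Set.Ici T₀) := fun i j t ht =>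
    (hP t ht i j).continuousWithinAt
  have hP0nn : ∀ i j, (0 : ℝ) ≤ P T₀ i j := by
    intro i j
    rw [hP0]
    by_cases h : i = j <;> simp [Matrix.one_apply, h]
  -- Step 1: entrywise nonnegativity on every compact interval [T₀, t₁]
  have key : ∀ t₁, T₀ ≤ t₁ → ∀ t ∈ Set.Icc T₀ t₁, ∀ i j, 0 ≤ P t i j := by
    intro t₁ ht₁
    -- bound on row sums of N on [T₀, t₁]
    obtain ⟨x₀, hx₀, hM⟩ := (isCompact_Icc (a := T₀) (b := t₁)).exists_isMaxOn
      ⟨T₀, by simp [ht₁]⟩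
      (continuousOn_finset_sum _ fun i _ => continuousOn_finset_sum _ fun k _ =>
        ((hNc i k).mono Set.Icc_subset_Ici_self))
    set M : ℝ := ∑ i, ∑ k, N x₀ i k with hMdef
    set L : ℝ := M + 1 with hLdef
    have hrow : ∀ t ∈ Set.Icc T₀ t₁, ∀ i : Fin m, ∑ k, N t i k < L := by
      intro t ht i
      have h1 : ∑ k, N t i k ≤ ∑ i', ∑ k, N t i' k :=
        Finset.single_le_sum (f := fun i' => ∑ k, N t i' k)
          (fun i' _ => Finset.sum_nonneg fun k _ => (hN0 t ht.1 i' k).le)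
          (Finset.mem_univ i)
      have h2 : ∑ i', ∑ k, N t i' k ≤ M := isMaxOn_iff.1 hM t ht
      linarith
    -- main ε-perturbation claim
    have main : ∀ ε > (0 : ℝ), ∀ t ∈ Set.Icc T₀ t₁, ∀ i j,
        0 < P t i j + ε * Real.exp (L * (t - T₀)) := by
      intro ε hε
      have hexpc : Continuous (fun s : ℝ => ε * Real.exp (L * (s - T₀))) :=
        continuous_const.mul (Real.continuous_exp.comp
          (continuous_const.mul (continuous_id.sub continuous_const)))
      by_contra hcon
      push_neg at hcon
      obtain ⟨tb, htb, ib, jb, hbad⟩ := hcon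
      -- the set of "bad" times
      set B : Set ℝ := ⋃ p : Fin m × Fin m,
        (Set.Icc T₀ t₁ ∩ (fun s => P s p.1 p.2 + ε * Real.exp (L * (s - T₀))) ⁻¹'
          Set.Iic 0) with hBdef
      have hφc : ∀ i j : Fin m, ContinuousOn
          (fun s => P s i j + ε * Real.exp (L * (s - T₀))) (Set.Icc T₀ t₁) := by
        intro i j
        exact ((hPc i j).mono Set.Icc_subset_Ici_self).add hexpc.continuousOn
      have hBclosed : IsClosed B :=
        isClosed_iUnion_of_finite fun p =>
          (hφc p.1 p.2).preimage_isClosed_of_isClosed isClosed_Icc isClosed_Iic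
      have hBne : B.Nonempty := ⟨tb, Set.mem_iUnion.2 ⟨⟨ib, jb⟩, htb, hbad⟩⟩
      have hBbdd : BddBelow B := ⟨T₀, by
        rintro s hs
        obtain ⟨p, hsp⟩ := Set.mem_iUnion.1 hs
        exact hsp.1.1⟩
      set τ : ℝ := sInf B with hτdef
      have hτB : τ ∈ B := hBclosed.csInf_mem hBne hBbdd
      obtain ⟨p, hτp⟩ := Set.mem_iUnion.1 hτB
      obtain ⟨i, j⟩ := p
      have hτIcc : τ ∈ Set.Icc T₀ t₁ := hτp.1
      have hτ0 : P τ i j + ε * Real.exp (L * (τ - T₀)) ≤ 0 := hτp.2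
      -- T₀ is not bad, so τ > T₀
      have hT₀good : ∀ k l : Fin m, 0 < P T₀ k l + ε * Real.exp (L * (T₀ - T₀)) := by
        intro k l
        have := hP0nn k l
        simp only [sub_self, mul_zero, Real.exp_zero, mul_one]
        linarith
      have hτgt : T₀ < τ := by
        rcases lt_or_eq_of_le hτIcc.1 with h | h
        · exact h
        · exfalso
          have := hT₀good i j
          rw [← h] at hτ0
          linarith
      -- before τ everything is strictly positive
      have hbefore : ∀ s ∈ Set.Ico T₀ τ, ∀ k l : Fin m,
          0 < P s k l + ε * Real.exp (L * (s - T₀)) := by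
        intro s hs k l
        by_contra hns
        push_neg at hns
        have hsB : s ∈ B := Set.mem_iUnion.2
          ⟨⟨k, l⟩, ⟨⟨hs.1, hs.2.le.trans hτIcc.2⟩, hns⟩⟩
        exact absurd (csInf_le hBbdd hsB) (not_le.2 hs.2)
      haveI hNB : (nhdsWithin τ (Set.Ioo T₀ τ)).NeBot := by
        apply mem_closure_iff_nhdsWithin_neBot.1
        rw [closure_Ioo hτgt.ne]
        exact Set.right_mem_Icc.2 hτgt.le
      -- at τ, continuity gives nonnegativity of all entries of the perturbation
      have hnonnegτ : ∀ k l : Fin m, 0 ≤ P τ k l + ε * Real.exp (L * (τ - T₀)) := by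
        intro k l
        have hcw : ContinuousWithinAt
            (fun s => P s k l + ε * Real.exp (L * (s - T₀))) (Set.Ioo T₀ τ) τ := by
          refine ContinuousWithinAt.mono ?_ (fun s hs => le_of_lt hs.1)
          exact (hPc k l τ (Set.mem_Ici.2 hτgt.le)).add hexpc.continuousWithinAt
        refine ge_of_tendsto hcw ?_
        filter_upwards [eventually_mem_nhdsWithin] with s hs
        exact (hbefore s ⟨hs.1.le, hs.2⟩ k l).le
      set E : ℝ := Real.exp (L * (τ - T₀)) with hEdef
      have hEpos : 0 < E := Real.exp_pos _
      have hτeq : P τ i j + ε * E = 0 := le_antisymm hτ0 (hnonnegτ i j)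
      have hPτ : ∀ k l : Fin m, -(ε * E) ≤ P τ k l := by
        intro k l
        have := hnonnegτ k l
        linarith
      -- the derivative of the (i,j) perturbed entry at τ is positive
      set D : ℝ := (N τ * P τ) i j + ε * (E * L) with hDdef
      have hf : HasDerivWithinAt
          (fun s => P s i j + ε * Real.exp (L * (s - T₀))) D (Set.Ici T₀) τ := by
        have h1 := hP τ hτIcc.1 i j
        have h2 : HasDerivAt (fun s => ε * Real.exp (L * (s - T₀))) (ε * (E * L)) τ := by
          simpa using
            (((hasDerivAt_id τ).sub_const T₀).const_mul L).exp.const_mul ε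
        exact h1.add h2.hasDerivWithinAt
      have hsum : (∑ k, N τ i k) * (-(ε * E)) ≤ (N τ * P τ) i j := by
        rw [Matrix.mul_apply, Finset.sum_mul]
        exact Finset.sum_le_sum fun k _ =>
          mul_le_mul_of_nonneg_left (hPτ k j) (hN0 τ hτIcc.1 i k).le
      have hεE : 0 < ε * E := mul_pos hε hEpos
      have hrowτ : ∑ k, N τ i k < L := hrow τ hτIcc i
      have hD : 0 < D := by
        have : (∑ k, N τ i k) * (-(ε * E)) > L * (-(ε * E)) := by
          apply mul_lt_mul_of_neg_right hrowτ
          linarith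
        have hLE : L * (-(ε * E)) = -(ε * (E * L)) := by ring
        rw [hLE] at this
        have := lt_of_lt_of_le this hsum
        simp only [hDdef]
        linarith
      -- but the function is positive before τ and zero at τ, so derivative ≤ 0
      have hfτ : HasDerivWithinAt
          (fun s => P s i j + ε * Real.exp (L * (s - T₀))) D (Set.Ioo T₀ τ) τ :=
        hf.mono fun s hs => le_of_lt hs.1
      have hslope := hasDerivWithinAt_iff_tendsto_slope.1 hfτ
      have hdiff : Set.Ioo T₀ τ \ {τ} = Set.Ioo T₀ τ :=
        Set.diff_singleton_eq_self (by simp)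
      rw [hdiff] at hslope
      have hD0 : D ≤ 0 := by
        refine le_of_tendsto hslope ?_
        filter_upwards [eventually_mem_nhdsWithin] with s hs
        have hspos := hbefore s ⟨hs.1.le, hs.2⟩ i j
        rw [slope_def_field]
        apply div_nonpos_of_nonneg_of_nonpos
        · rw [hτeq]; linarith
        · linarith [hs.2]
      linarith
    -- from the ε-claim, conclude nonnegativity
    intro t ht i j
    by_contra hneg
    push_neg at hneg
    have hEpos : 0 < Real.exp (L * (t - T₀)) := Real.exp_pos _
    have hεpos : 0 < -P t i j / (2 * Real.exp (L * (t - T₀))) :=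
      div_pos (by linarith) (by linarith)
    have hmm := main (-P t i j / (2 * Real.exp (L * (t - T₀)))) hεpos t ht i j
    have heq : -P t i j / (2 * Real.exp (L * (t - T₀))) * Real.exp (L * (t - T₀))
        = -P t i j / 2 := by
      field_simp
    rw [heq] at hmm
    linarith
  -- Step 2: strict positivity
  intro t ht i j
  have hnn : ∀ s ∈ Set.Icc T₀ t, ∀ k l : Fin m, 0 ≤ P s k l := key t ht.le
  -- the diagonal entry P s j j is at least 1 on [T₀, t]
  have hjj : MonotoneOn (fun s => P s j j) (Set.Icc T₀ t) := by
    apply monotoneOn_of_deriv_nonneg (convex_Icc _ _)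
    · exact (hPc j j).mono Set.Icc_subset_Ici_self
    · intro x hx
      rw [interior_Icc] at hx
      exact ((hP x hx.1.le j j).hasDerivAt
        (Ici_mem_nhds hx.1)).differentiableAt.differentiableWithinAt
    · intro x hx
      rw [interior_Icc] at hx
      have hd := (hP x hx.1.le j j).hasDerivAt (Ici_mem_nhds hx.1)
      rw [hd.deriv, Matrix.mul_apply]
      exact Finset.sum_nonneg fun k _ =>
        mul_nonneg (hN0 x hx.1.le j k).le (hnn x ⟨hx.1.le, hx.2.le⟩ k j)
  have hjj1 : ∀ s ∈ Set.Icc T₀ t, 1 ≤ P s j j := by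
    intro s hs
    have := hjj (Set.left_mem_Icc.2 ht.le) hs hs.1
    have h1 : P T₀ j j = 1 := by rw [hP0]; simp [Matrix.one_apply]
    simpa [h1] using this
  -- lower bound for N · i j on [T₀, t]
  obtain ⟨x₀, hx₀, hc⟩ := (isCompact_Icc (a := T₀) (b := t)).exists_isMinOn
    ⟨T₀, by simp [ht.le]⟩ ((hNc i j).mono Set.Icc_subset_Ici_self)
  set c : ℝ := N x₀ i j with hcdef
  have hcpos : 0 < c := hN0 x₀ hx₀.1 i j
  -- the entry grows at rate at least c
  have hmon : MonotoneOn (fun s => P s i j - c * s) (Set.Icc T₀ t) := by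
    apply monotoneOn_of_deriv_nonneg (convex_Icc _ _)
    · exact ((hPc i j).mono Set.Icc_subset_Ici_self).sub
        (continuous_const.mul continuous_id).continuousOn
    · intro x hx
      rw [interior_Icc] at hx
      exact (((hP x hx.1.le i j).hasDerivAt (Ici_mem_nhds hx.1)).sub
        ((hasDerivAt_id x).const_mul c)).differentiableAt.differentiableWithinAt
    · intro x hx
      rw [interior_Icc] at hx
      have hd : HasDerivAt (fun s => P s i j - c * s) ((N x * P x) i j - c * 1) x :=
        ((hP x hx.1.le i j).hasDerivAt (Ici_mem_nhds hx.1)).sub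
          ((hasDerivAt_id x).const_mul c)
      rw [hd.deriv]
      have hxI : x ∈ Set.Icc T₀ t := ⟨hx.1.le, hx.2.le⟩
      have h1 : N x i j * P x j j ≤ (N x * P x) i j := by
        rw [Matrix.mul_apply]
        exact Finset.single_le_sum
          (fun k _ => mul_nonneg (hN0 x hx.1.le i k).le (hnn x hxI k j))
          (Finset.mem_univ j)
      have h2 : c ≤ N x i j := isMinOn_iff.1 hc x hxI
      have h3 : 1 ≤ P x j j := hjj1 x hxI
      nlinarith
  have hend := hmon (Set.left_mem_Icc.2 ht.le) (Set.right_mem_Icc.2 ht.le) ht.le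
  have hPT₀ : 0 ≤ P T₀ i j := hP0nn i j
  simp only at hend
  nlinarith [mul_pos hcpos (sub_pos.2 ht)]
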